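/- Let k be an algebraically closed field of characteristic zero and let z₁,…,z₆ ∈ ℙ²(k) be six distinct points, no three collinear, forming a star-free configuration: there is no point p ∈ ℙ²(k) outside {z₁,…,z₆} and no partition of {z₁,…,z₆} into three pairs such that the three lines spanned by the pairs all pass through p. Then for every point p ∈ ℙ²(k), the set of lines joining p to the points zᵢ distinct from p (i.e. the set {span(p, zᵢ) : zᵢ ≠ p}) has at least 4 elements. Equivalently, the linear projection away from any point p maps the points of the configuration distinct from p to at least 4 distinct images. -/

import Mathlib

open Submodule Set

/-- Three linearly independent triple: third not in span of pair. -/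
lemma aux_notMemSpanPair {k : Type} [Field k] (z : Fin 6 → Fin 3 → k)
    (hcol : ∀ i j l : Fin 6, i ≠ j → j ≠ l → i ≠ l →
      LinearIndependent k ![z i, z j, z l])
    {i j l : Fin 6} (hij : i ≠ j) (hjl : j ≠ l) (hil : i ≠ l) :
    z l ∉ Submodule.span k {z i, z j} := by
  have h : LinearIndependent k (Fin.cons (z l) ![z i, z j] : Fin 3 → Fin 3 → k) :=
    hcol l i j (Ne.symm hil) hij (Ne.symm hjl)
  rw [linearIndependent_fin_cons] at h
  have h2 := h.2
  rwa [Matrix.range_cons_cons_empty] at h2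

lemma aux_keyA {k : Type} [Field k] {p : Fin 3 → k}
    (z : Fin 6 → Fin 3 → k) (hz : ∀ i, z i ≠ 0)
    (hdist : ∀ i j : Fin 6, Submodule.span k {z i} = Submodule.span k {z j} → i = j)
    {i j : Fin 6} (hij : i ≠ j)
    (hspan : Submodule.span k {p, z i} = Submodule.span k {p, z j}) :
    p ∈ Submodule.span k {z i, z j} := by
  have hzj : z j ∈ Submodule.span k {p, z i} := by
    rw [hspan]; exact subset_span (by simp)
  rw [mem_span_pair] at hzj
  obtain ⟨a, b, hab⟩ := hzj
  by_cases ha : a = 0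
  · subst ha
    rw [zero_smul, zero_add] at hab
    have hb : IsUnit b := by
      rcases eq_or_ne b 0 with rfl | hb
      · exact absurd (by simpa using hab.symm) (hz j)
      · exact hb.isUnit
    have : Submodule.span k {z j} = Submodule.span k {z i} := by
      rw [show ({z j} : Set (Fin 3 → k)) = {b • z i} from by rw [hab]]
      exact Submodule.span_singleton_smul_eq hb _
    exact absurd (hdist j i this).symm hij
  · rw [mem_span_pair]
    refine ⟨-(a⁻¹ * b), a⁻¹, ?_⟩
    rw [← hab]
    match_scalars <;> field_simp <;> ring

lemma aux_inj6 {α : Type*} {a b c d u v : α}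
    (hab : a ≠ b) (hac : a ≠ c) (had : a ≠ d) (hau : a ≠ u) (hav : a ≠ v)
    (hbc : b ≠ c) (hbd : b ≠ d) (hbu : b ≠ u) (hbv : b ≠ v)
    (hcd : c ≠ d) (hcu : c ≠ u) (hcv : c ≠ v)
    (hdu : d ≠ u) (hdv : d ≠ v) (huv : u ≠ v) :
    Function.Injective ![a, b, c, d, u, v] := by
  have h5 : (![a, b, c, d, u, v] : Fin 6 → α) 5 = v := rfl
  have h4 : (![a, b, c, d, u, v] : Fin 6 → α) 4 = u := rfl
  have h3 : (![a, b, c, d, u, v] : Fin 6 → α) 3 = d := rfl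
  have h2 : (![a, b, c, d, u, v] : Fin 6 → α) 2 = c := rfl
  have h1 : (![a, b, c, d, u, v] : Fin 6 → α) 1 = b := rfl
  have h0 : (![a, b, c, d, u, v] : Fin 6 → α) 0 = a := rfl
  intro x y hxy
  fin_cases x <;> fin_cases y <;>
    simp_all only [h0, h1, h2, h3, h4, h5, ne_eq, not_false_eq_true, Fin.isValue] <;>
    first | rfl | (exfalso; tauto)


/-- A configuration of six pairwise distinct points of `ℙ²(k)` (given by nonzero vectors
`z i ∈ k³`), no three collinear, is *star-free* if no point of `ℙ²(k)` outside the
configuration lies on the three lines spanned by some partition of the six points into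
three pairs. -/
def IsStarFree {k : Type} [Field k] (z : Fin 6 → Fin 3 → k) : Prop :=
  ¬ ∃ q : Fin 3 → k, q ≠ 0 ∧ (∀ i, q ∉ Submodule.span k {z i}) ∧
      ∃ e : Equiv.Perm (Fin 6),
        q ∈ Submodule.span k {z (e 0), z (e 1)} ∧
        q ∈ Submodule.span k {z (e 2), z (e 3)} ∧
        q ∈ Submodule.span k {z (e 4), z (e 5)}

/-- For a star-free configuration of six points, no three collinear, the linear
projection away from any point `p` of `ℙ²(k)` maps the points of the configuration
distinct from `p` to at least 4 distinct images: the set of lines joining `p` to the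
points of the configuration distinct from `p` has at least 4 elements. -/
theorem starFree_projection_four_images
    (k : Type) [Field k] [IsAlgClosed k] [CharZero k]
    (z : Fin 6 → Fin 3 → k) (hz : ∀ i, z i ≠ 0)
    (hdist : ∀ i j : Fin 6, Submodule.span k {z i} = Submodule.span k {z j} → i = j)
    (hcol : ∀ i j l : Fin 6, i ≠ j → j ≠ l → i ≠ l →
      LinearIndependent k ![z i, z j, z l])
    (hstar : IsStarFree z)
    (p : Fin 3 → k) (hp : p ≠ 0) :
    4 ≤ Set.ncard {L : Submodule k (Fin 3 → k) |
        ∃ i : Fin 6, Submodule.span k {z i} ≠ Submodule.span k {p} ∧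
          L = Submodule.span k {p, z i}} := by
  classical
  set f : Fin 6 → Submodule k (Fin 3 → k) := fun i => Submodule.span k {p, z i} with hf
  set S : Set (Submodule k (Fin 3 → k)) :=
    {L | ∃ i : Fin 6, Submodule.span k {z i} ≠ Submodule.span k {p} ∧
      L = Submodule.span k {p, z i}} with hS
  have hSsub : S ⊆ Set.range f := by rintro L ⟨i, -, rfl⟩; exact ⟨i, rfl⟩
  have hfin : S.Finite := (Set.finite_range f).subset hSsub
  by_cases hA : ∃ i₀, Submodule.span k {z i₀} = Submodule.span k {p}
  · obtain ⟨i₀, hi₀⟩ := hA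
    have hSeq : S = f '' {i₀}ᶜ := by
      ext L
      constructor
      · rintro ⟨i, hne, rfl⟩
        exact ⟨i, fun h => hne (by rw [Set.mem_singleton_iff] at h; rw [h]; exact hi₀), rfl⟩
      · rintro ⟨i, hi, rfl⟩
        exact ⟨i, fun h => hi (hdist i i₀ (h.trans hi₀.symm)), rfl⟩
    have hinj : Set.InjOn f {i₀}ᶜ := by
      intro i hi j hj hfij
      by_contra hij
      have hpmem : p ∈ Submodule.span k {z i, z j} := aux_keyA z hz hdist hij hfij
      have hzi₀ : z i₀ ∈ Submodule.span k {z i, z j} := by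
        have h1 : z i₀ ∈ Submodule.span k {p} := by
          rw [← hi₀]; exact subset_span rfl
        rw [Submodule.mem_span_singleton] at h1
        obtain ⟨c, hc⟩ := h1
        rw [← hc]; exact Submodule.smul_mem _ _ hpmem
      exact aux_notMemSpanPair z hcol hij (fun h => hj h) (fun h => hi h) hzi₀
    have h5 : ({i₀} : Set (Fin 6))ᶜ.ncard = 5 := by
      have := Set.ncard_add_ncard_compl ({i₀} : Set (Fin 6))
      simp [Set.ncard_singleton, Nat.card_eq_fintype_card] at this
      omega
    rw [hSeq, Set.ncard_image_of_injOn hinj, h5]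
    omega
  · push_neg at hA
    by_contra hlt
    push_neg at hlt
    have hle3 : S.ncard ≤ 3 := by omega
    have hmemS : ∀ i, f i ∈ S := fun i => ⟨i, hA i, rfl⟩
    have noTriple : ∀ i j l : Fin 6, i ≠ j → j ≠ l → i ≠ l →
        f i = f j → f i = f l → False := by
      intro i j l hij hjl hil h1 h2
      have hpmem : p ∈ Submodule.span k {z i, z j} := aux_keyA z hz hdist hij h1
      have hsub : Submodule.span k {p, z i} ≤ Submodule.span k {z i, z j} := by
        rw [Submodule.span_le]
        rintro x (rfl | hx)
        · exact hpmem
        · rw [Set.mem_singleton_iff] at hx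
          subst hx
          exact subset_span (by simp)
      have hzl : z l ∈ Submodule.span k {p, z i} := by
        rw [show Submodule.span k {p, z i} = f l from h2]
        exact subset_span (by simp)
      exact aux_notMemSpanPair z hcol hij hjl hil (hsub hzl)
    -- Finset pigeonhole
    set t : Finset (Submodule k (Fin 3 → k)) := hfin.toFinset with htdef
    have htcard : t.card ≤ 3 := by
      rwa [← Set.ncard_eq_toFinset_card S hfin]
    have hmem_t : ∀ i : Fin 6, f i ∈ t := fun i => hfin.mem_toFinset.mpr (hmemS i)
    obtain ⟨a, -, b, -, hab, hfab⟩ :=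
      Finset.exists_ne_map_eq_of_card_lt_of_maps_to
        (s := (Finset.univ : Finset (Fin 6))) (t := t)
        (by simpa using lt_of_le_of_lt htcard (by norm_num))
        (fun i _ => hmem_t i)
    set s₂ : Finset (Fin 6) := Finset.univ \ {a, b} with hs₂def
    have hs₂card : s₂.card = 4 := by
      rw [hs₂def, Finset.card_sdiff_of_subset (Finset.subset_univ _)]
      rw [Finset.card_insert_of_notMem (by simpa using hab), Finset.card_singleton]
      simp
    have hne_fa : ∀ i : Fin 6, i ≠ a → i ≠ b → f i ≠ f a :=
      fun i hia hib h => noTriple a b i hab (Ne.symm hib) (Ne.symm hia) hfab h.symm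
    obtain ⟨c, hc, d, hd, hcd, hfcd⟩ :=
      Finset.exists_ne_map_eq_of_card_lt_of_maps_to
        (s := s₂) (t := t.erase (f a))
        (by
          have : (t.erase (f a)).card = t.card - 1 :=
            Finset.card_erase_of_mem (hmem_t a)
          omega)
        (by
          intro i hi
          rw [hs₂def] at hi
          simp only [Finset.mem_coe, Finset.mem_sdiff, Finset.mem_univ, Finset.mem_insert,
            Finset.mem_singleton, true_and] at hi
          push_neg at hi
          exact Finset.mem_erase.mpr ⟨hne_fa i hi.1 hi.2, hmem_t i⟩)
    have hcab : c ≠ a ∧ c ≠ b := by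
      rw [hs₂def] at hc
      simpa using hc
    have hdab : d ≠ a ∧ d ≠ b := by
      rw [hs₂def] at hd
      simpa using hd
    have hne_fc : ∀ i : Fin 6, i ≠ c → i ≠ d → f i ≠ f c :=
      fun i hic hid h => noTriple c d i hcd (Ne.symm hid) (Ne.symm hic) hfcd h.symm
    -- the last two elements
    set s₃ : Finset (Fin 6) := s₂ \ {c, d} with hs₃def
    have hs₃card : s₃.card = 2 := by
      rw [hs₃def, Finset.card_sdiff_of_subset (by
        intro x hx
        rcases Finset.mem_insert.mp hx with rfl | hx
        · exact hc
        · rw [Finset.mem_singleton] at hx; subst hx; exact hd)]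
      rw [Finset.card_insert_of_notMem (by simpa using hcd), Finset.card_singleton, hs₂card]
    obtain ⟨u, v, huv, hs₃eq⟩ := Finset.card_eq_two.mp hs₃card
    have hu : u ∈ s₃ := by rw [hs₃eq]; simp
    have hv : v ∈ s₃ := by rw [hs₃eq]; simp
    have huprop : u ≠ a ∧ u ≠ b ∧ u ≠ c ∧ u ≠ d := by
      rw [hs₃def, hs₂def] at hu
      simp only [Finset.mem_sdiff, Finset.mem_univ, Finset.mem_insert,
        Finset.mem_singleton, true_and] at hu
      tauto
    have hvprop : v ≠ a ∧ v ≠ b ∧ v ≠ c ∧ v ≠ d := by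
      rw [hs₃def, hs₂def] at hv
      simp only [Finset.mem_sdiff, Finset.mem_univ, Finset.mem_insert,
        Finset.mem_singleton, true_and] at hv
      tauto
    have hfuv : f u = f v := by
      have hfc_ne_fa : f c ≠ f a := hne_fa c hcab.1 hcab.2
      have hcard2 : ((t.erase (f a)).erase (f c)).card ≤ 1 := by
        rw [Finset.card_erase_of_mem
          (Finset.mem_erase.mpr ⟨hfc_ne_fa, hmem_t c⟩),
          Finset.card_erase_of_mem (hmem_t a)]
        omega
      have hu' : f u ∈ (t.erase (f a)).erase (f c) :=
        Finset.mem_erase.mpr ⟨hne_fc u huprop.2.2.1 huprop.2.2.2,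
          Finset.mem_erase.mpr ⟨hne_fa u huprop.1 huprop.2.1, hmem_t u⟩⟩
      have hv' : f v ∈ (t.erase (f a)).erase (f c) :=
        Finset.mem_erase.mpr ⟨hne_fc v hvprop.2.2.1 hvprop.2.2.2,
          Finset.mem_erase.mpr ⟨hne_fa v hvprop.1 hvprop.2.1, hmem_t v⟩⟩
      exact Finset.card_le_one.mp hcard2 _ hu' _ hv'
    -- build the permutation
    have hinj : Function.Injective ![a, b, c, d, u, v] :=
      aux_inj6 hab (Ne.symm hcab.1) (Ne.symm hdab.1) (Ne.symm huprop.1) (Ne.symm hvprop.1)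
        (Ne.symm hcab.2) (Ne.symm hdab.2) (Ne.symm huprop.2.1) (Ne.symm hvprop.2.1)
        hcd (Ne.symm huprop.2.2.1) (Ne.symm hvprop.2.2.1)
        (Ne.symm huprop.2.2.2) (Ne.symm hvprop.2.2.2) huv
    set e : Equiv.Perm (Fin 6) :=
      Equiv.ofBijective _ (Finite.injective_iff_bijective.mp hinj) with hedef
    apply hstar
    refine ⟨p, hp, ?_, e, ?_, ?_, ?_⟩
    · intro i hpi
      rw [Submodule.mem_span_singleton] at hpi
      obtain ⟨c', hc'⟩ := hpi
      have hc'0 : c' ≠ 0 := by rintro rfl; simp at hc'; exact hp hc'.symm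
      apply hA i
      rw [← hc', Submodule.span_singleton_smul_eq hc'0.isUnit]
    · have : e 0 = a ∧ e 1 = b := by constructor <;> rfl
      rw [this.1, this.2]
      exact aux_keyA z hz hdist hab hfab
    · have : e 2 = c ∧ e 3 = d := by constructor <;> rfl
      rw [this.1, this.2]
      exact aux_keyA z hz hdist hcd hfcd
    · have : e 4 = u ∧ e 5 = v := by constructor <;> rfl
      rw [this.1, this.2]
      exact aux_keyA z hz hdist huv hfuv
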